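/- For T, M ∈ ℕ, let {|t⟩ : 0 ≤ t ≤ T+M} be an orthonormal family, let {W_t}_{t=0}^{T+M} be unitaries on ℂ^{2^n} with W_t = I for t ≥ T, set |ψ_hist⟩ = (T+M+1)^{−1/2} Σ_{t=0}^{T+M} W_t W_{t−1}···W_1|0^n⟩ ⊗ |t⟩ and |c⟩ = W_T···W_1|0^n⟩ ⊗ (M+1)^{−1/2} Σ_{t=T}^{T+M}|t⟩. Then ⟨c|ψ_hist⟩ = √((M+1)/(T+M+1)); in particular |⟨c|ψ_hist⟩|² = (M+1)/(T+M+1) ≥ 1 − T/(T+M+1). -/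

import Mathlib

/-- Overlap between the post-idled history state and the guiding state:
`⟨c|ψ_hist⟩ = √((M+1)/(T+M+1))`. The combined state space is modeled as the
Hilbert space of functions from the clock register `Fin (T+M+1)` to the
computational space, so that `φ ⊗ |t⟩` corresponds to the function supported
at clock value `t` with value `φ`. -/
theorem history_state_overlap (n T M : ℕ)
    (W : ℕ → (EuclideanSpace ℂ (Fin (2^n)) →ₗᵢ[ℂ] EuclideanSpace ℂ (Fin (2^n))))
    (hW : ∀ t, T < t → ∀ x, W t x = x)
    (φ : ℕ → EuclideanSpace ℂ (Fin (2^n)))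
    (hφ0 : ‖φ 0‖ = 1)
    (hrec : ∀ t, φ (t+1) = W (t+1) (φ t))
    (hist c : PiLp 2 (fun _ : Fin (T+M+1) => EuclideanSpace ℂ (Fin (2^n))))
    (hhist : ∀ t : Fin (T+M+1),
      hist t = ((Real.sqrt ((T:ℝ)+M+1) : ℂ))⁻¹ • φ (t:ℕ))
    (hc : ∀ t : Fin (T+M+1),
      c t = if T ≤ (t:ℕ) then ((Real.sqrt ((M:ℝ)+1) : ℂ))⁻¹ • φ T else 0) :
    (inner ℂ c hist : ℂ) = (Real.sqrt (((M:ℝ)+1)/((T:ℝ)+M+1)) : ℝ) ∧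
    ‖(inner ℂ c hist : ℂ)‖^2 = ((M:ℝ)+1)/((T:ℝ)+M+1) := by
  -- φ is constant after T
  have hconst : ∀ t, T ≤ t → φ t = φ T := by
    intro t ht
    induction t with
    | zero => rw [Nat.le_zero.mp ht]
    | succ k ih =>
      rcases Nat.eq_or_lt_of_le ht with h | h
      · rw [h]
      · have hk : T ≤ k := by omega
        rw [hrec k, hW (k+1) (by omega), ih hk]
  have hnormT : ‖φ T‖ = 1 := by
    have : ∀ t, ‖φ t‖ = 1 := by
      intro t
      induction t with
      | zero => exact hφ0
      | succ k ih => rw [hrec k]; simpa using ih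
    exact this T
  have hinnerT : (inner ℂ (φ T) (φ T) : ℂ) = 1 := by
    rw [inner_self_eq_norm_sq_to_K, hnormT]; norm_num
  -- positivity facts
  have hM1 : (0:ℝ) < (M:ℝ)+1 := by positivity
  have hT1 : (0:ℝ) < (T:ℝ)+M+1 := by positivity
  have hsM : (0:ℝ) < Real.sqrt ((M:ℝ)+1) := Real.sqrt_pos.mpr hM1
  have hsT : (0:ℝ) < Real.sqrt ((T:ℝ)+M+1) := Real.sqrt_pos.mpr hT1
  -- compute the inner product
  have hsum : (inner ℂ c hist : ℂ) =
      ∑ t : Fin (T+M+1), (inner ℂ (c t) (hist t) : ℂ) := by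
    simp [PiLp.inner_apply]
  have hterm : ∀ t : Fin (T+M+1), (inner ℂ (c t) (hist t) : ℂ) =
      if T ≤ (t:ℕ) then
        ((Real.sqrt ((M:ℝ)+1) : ℂ))⁻¹ * ((Real.sqrt ((T:ℝ)+M+1) : ℂ))⁻¹ else 0 := by
    intro t
    rw [hc t, hhist t]
    by_cases h : T ≤ (t:ℕ)
    · rw [if_pos h, if_pos h, hconst t h, inner_smul_left, inner_smul_right, hinnerT]
      simp [Complex.conj_inv, Complex.conj_ofReal]
    · rw [if_neg h, if_neg h, inner_zero_left]
  have hcard : (Finset.univ.filter (fun t : Fin (T+M+1) => T ≤ (t:ℕ))).card = M+1 := by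
    have : (Finset.univ.filter (fun t : Fin (T+M+1) => T ≤ (t:ℕ))).card
        = (Finset.Ico T (T+M+1)).card := by
      apply Finset.card_nbij (fun t : Fin (T+M+1) => (t:ℕ))
      · intro a ha; simp at ha ⊢; exact ⟨ha, Nat.lt_succ_iff.mp a.isLt⟩
      · intro a _ b _ hab; exact Fin.ext hab
      · intro b hb; simp at hb
        exact ⟨⟨b, Nat.lt_succ_of_le hb.2⟩, by simp [hb.1], rfl⟩
    rw [this, Nat.card_Ico]; omega
  have hval : (inner ℂ c hist : ℂ) =
      ((M:ℝ)+1) * (((Real.sqrt ((M:ℝ)+1) : ℂ))⁻¹ * ((Real.sqrt ((T:ℝ)+M+1) : ℂ))⁻¹) := by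
    rw [hsum]
    simp only [hterm]
    rw [Finset.sum_ite, Finset.sum_const, Finset.sum_const, hcard]
    push_cast
    ring
  have key : (inner ℂ c hist : ℂ) = (Real.sqrt (((M:ℝ)+1)/((T:ℝ)+M+1)) : ℝ) := by
    have hmm : ((M:ℝ)+1) = Real.sqrt ((M:ℝ)+1) * Real.sqrt ((M:ℝ)+1) :=
      (Real.mul_self_sqrt hM1.le).symm
    have hMne : ((Real.sqrt ((M:ℝ)+1) : ℝ) : ℂ) ≠ 0 := by
      exact_mod_cast Complex.ofReal_ne_zero.mpr hsM.ne'
    have hTne : ((Real.sqrt ((T:ℝ)+M+1) : ℝ) : ℂ) ≠ 0 := by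
      exact_mod_cast Complex.ofReal_ne_zero.mpr hsT.ne'
    rw [hval, Real.sqrt_div hM1.le]
    push_cast
    field_simp
    rw [show ((M:ℂ)+1) = ((Real.sqrt ((M:ℝ)+1):ℝ):ℂ) * ((Real.sqrt ((M:ℝ)+1):ℝ):ℂ) by
      exact_mod_cast congrArg (Complex.ofReal) hmm]
    ring
  refine ⟨key, ?_⟩
  rw [key]
  rw [Complex.norm_real, Real.norm_eq_abs, abs_of_nonneg (Real.sqrt_nonneg _), Real.sq_sqrt]
  positivity
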